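/- Let A and B be Banach algebras and suppose that B contains a nonzero idempotent element. If the projective tensor product Banach algebra A ⊗̂ B is strong pseudo-amenable, then A is strong pseudo-amenable. -/

import Mathlib

noncomputable section

open ContinuousLinearMap NormedSpace

/-- A directed index system for nets. -/
structure DirSys : Type 1 where
  ι : Type
  le : ι → ι → Prop
  refl : ∀ i, le i i
  trans : ∀ {i j k}, le i j → le j k → le i k
  nonempty : Nonempty ι
  directed : ∀ i j, ∃ k, le i k ∧ le j k

/-- Convergence of a net indexed by a directed system, in a (pseudo)metric space. -/
def DirSys.Tendsto (D : DirSys) {X : Type*} [PseudoMetricSpace X] (m : D.ι → X) (x : X) : Prop :=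
  ∀ ε : ℝ, 0 < ε → ∃ i, ∀ j, D.le i j → dist (m j) x < ε

variable (A : Type*) [NonUnitalNormedRing A] [NormedSpace ℂ A]
  [IsScalarTower ℂ A A] [SMulCommClass ℂ A A]

/-- The continuous bilinear forms on `A`, i.e. the dual space of the projective tensor
product `A ⊗̂ A`. -/
abbrev BilForms := A →L[ℂ] StrongDual ℂ A

/-- The bidual `(A ⊗̂ A)**` of the projective tensor product, realized concretely as the
dual space of the space of continuous bilinear forms on `A` (the latter being canonically,
isometrically, the dual of `A ⊗̂ A`). -/
abbrev TensorBidual := StrongDual ℂ (BilForms A)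

/-- The bidual `A**` of `A`. -/
abbrev Bidual := StrongDual ℂ (StrongDual ℂ A)

instance TensorBidual.instNormedAddCommGroup : NormedAddCommGroup (TensorBidual A) :=
  @ContinuousLinearMap.toNormedAddCommGroup ℂ ℂ (BilForms A) ℂ _ _ _ _ _ _ _ _

instance TensorBidual.instNormedSpace : NormedSpace ℂ (TensorBidual A) :=
  ContinuousLinearMap.toNormedSpace (E := BilForms A) (F := ℂ) (σ₁₂ := RingHom.id ℂ) (𝕜' := ℂ)

variable {A}

/-- The elementary tensor `x ⊗ y`, viewed inside `(A ⊗̂ A)**` via the canonical isometric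
embedding of `A ⊗̂ A` into its bidual. -/
def elemT (x y : A) : TensorBidual A :=
  (ContinuousLinearMap.apply ℂ ℂ y).comp (ContinuousLinearMap.apply ℂ (StrongDual ℂ A) x)

variable (A)

/-- The canonical isometric copy of `A ⊗̂ A` inside its bidual: the closure of the linear
span of the elementary tensors. -/
def ptp : Submodule ℂ (TensorBidual A) :=
  (Submodule.span ℂ {m : TensorBidual A | ∃ x y : A, m = elemT x y}).topologicalClosure

/-- The map `f ↦ f·a` on bilinear forms, `(f·a)(x,y) = f(ax, y)`; predual of the left
module action of `A` on `(A ⊗̂ A)**`. -/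
def leftBil (a : A) : BilForms A →L[ℂ] BilForms A :=
  (compL ℂ A A (StrongDual ℂ A)).flip (ContinuousLinearMap.mul ℂ A a)

/-- The map `f ↦ a·f` on bilinear forms, `(a·f)(x,y) = f(x, ya)`; predual of the right
module action of `A` on `(A ⊗̂ A)**`. -/
def rightBil (a : A) : BilForms A →L[ℂ] BilForms A :=
  compL ℂ A (StrongDual ℂ A) (StrongDual ℂ A)
    ((compL ℂ A A ℂ).flip ((ContinuousLinearMap.mul ℂ A).flip a))

variable {A}

/-- The left module action `a · m` of `A` on `(A ⊗̂ A)**`, extending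
`a · (x ⊗ y) = (a x) ⊗ y`. -/
def tsmulL (a : A) (m : TensorBidual A) : TensorBidual A := m.comp (leftBil A a)

/-- The right module action `m · a` of `A` on `(A ⊗̂ A)**`, extending
`(x ⊗ y) · a = x ⊗ (y a)`. -/
def tsmulR (a : A) (m : TensorBidual A) : TensorBidual A := m.comp (rightBil A a)

variable (A)

/-- The adjoint `π_A* : A* → (A ⊗̂ A)*` of the product morphism `π_A`, namely
`(π_A* f)(x, y) = f (x y)`. -/
def piStar : StrongDual ℂ A →L[ℂ] BilForms A :=
  ((compL ℂ A (A →L[ℂ] A) (StrongDual ℂ A)).flip (ContinuousLinearMap.mul ℂ A)).comp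
    (compL ℂ A A ℂ)

variable {A}

/-- The second adjoint `π_A** : (A ⊗̂ A)** → A**` of the product morphism. -/
def piSS (m : TensorBidual A) : Bidual A := m.comp (piStar A)

variable (A)

/-- The map `f ↦ f·a` on `A*`, `(f·a)(x) = f(ax)`. -/
def dualROp (a : A) : StrongDual ℂ A →L[ℂ] StrongDual ℂ A :=
  (compL ℂ A A ℂ).flip (ContinuousLinearMap.mul ℂ A a)

/-- The map `f ↦ a·f` on `A*`, `(a·f)(x) = f(xa)`. -/
def dualLOp (a : A) : StrongDual ℂ A →L[ℂ] StrongDual ℂ A :=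
  (compL ℂ A A ℂ).flip ((ContinuousLinearMap.mul ℂ A).flip a)

variable {A}

/-- The product `a · Φ` of `a ∈ A` and `Φ ∈ A**`: `(a·Φ)(f) = Φ(f·a)`. -/
def bsmulL (a : A) (Φ : Bidual A) : Bidual A := Φ.comp (dualROp A a)

/-- The product `Φ · a` of `Φ ∈ A**` and `a ∈ A`: `(Φ·a)(f) = Φ(a·f)`. -/
def bsmulR (a : A) (Φ : Bidual A) : Bidual A := Φ.comp (dualLOp A a)

/-- The canonical isometric embedding of `A` into its bidual. -/
def inclB (a : A) : Bidual A := NormedSpace.inclusionInDoubleDual ℂ A a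

variable (A)

/-- A Banach algebra `A` is *strong pseudo-amenable* if there is a (not necessarily bounded)
net `(m_α)` in `(A ⊗̂ A)**` such that `a·m_α − m_α·a → 0` and
`a·π_A**(m_α) = π_A**(m_α)·a → a` for every `a ∈ A`. -/
def StrongPseudoAmenable : Prop :=
  ∃ (D : DirSys) (m : D.ι → TensorBidual A),
    (∀ a : A, D.Tendsto (fun α => tsmulL a (m α) - tsmulR a (m α)) 0) ∧
    (∀ (a : A) (α : D.ι), bsmulL a (piSS (m α)) = bsmulR a (piSS (m α))) ∧
    (∀ a : A, D.Tendsto (fun α => bsmulR a (piSS (m α))) (inclB a))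

/-- A Banach algebra `A` is *pseudo-amenable* if there is a (not necessarily bounded)
net `(m_α)` in `A ⊗̂ A` such that `a·m_α − m_α·a → 0` and `π_A(m_α)a → a` for every `a ∈ A`. -/
def PseudoAmenable : Prop :=
  ∃ (D : DirSys) (m : D.ι → TensorBidual A),
    (∀ α, m α ∈ ptp A) ∧
    (∀ a : A, D.Tendsto (fun α => tsmulL a (m α) - tsmulR a (m α)) 0) ∧
    (∀ a : A, D.Tendsto (fun α => bsmulR a (piSS (m α))) (inclB a))

/-- A Banach algebra `A` is *pseudo-contractible* if there is a net `(m_α)` in `A ⊗̂ A`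
such that `a·m_α = m_α·a` and `π_A(m_α)a → a` for every `a ∈ A`. -/
def PseudoContractible : Prop :=
  ∃ (D : DirSys) (m : D.ι → TensorBidual A),
    (∀ α, m α ∈ ptp A) ∧
    (∀ (a : A) (α : D.ι), tsmulL a (m α) = tsmulR a (m α)) ∧
    (∀ a : A, D.Tendsto (fun α => bsmulR a (piSS (m α))) (inclB a))

/-- A Banach algebra `A` is *amenable* if it has a bounded approximate diagonal: a bounded
net `(m_α)` in `A ⊗̂ A` such that `a·m_α − m_α·a → 0` and `π_A(m_α)a → a` for every `a ∈ A`. -/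
def AmenableBanachAlgebra : Prop :=
  ∃ (D : DirSys) (m : D.ι → TensorBidual A) (C : ℝ),
    (∀ α, m α ∈ ptp A) ∧
    (∀ α, ‖m α‖ ≤ C) ∧
    (∀ a : A, D.Tendsto (fun α => tsmulL a (m α) - tsmulR a (m α)) 0) ∧
    (∀ a : A, D.Tendsto (fun α => bsmulR a (piSS (m α))) (inclB a))

end

/-- `(C, t)` is a realization of the projective tensor product `A ⊗̂ B` of Banach spaces:
`t` is bilinear and contractive, elementary tensors have dense linear span, and `C` has the
universal (isometric) extension property for bounded bilinear maps into Banach spaces.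
These properties determine `C` up to isometric isomorphism. -/
def IsProjectiveTensorProduct (A B C : Type)
    [NormedAddCommGroup A] [NormedSpace ℂ A] [NormedAddCommGroup B] [NormedSpace ℂ B]
    [NormedAddCommGroup C] [NormedSpace ℂ C] (t : A → B → C) : Prop :=
  (∀ a a' : A, ∀ b : B, t (a + a') b = t a b + t a' b) ∧
  (∀ a : A, ∀ b b' : B, t a (b + b') = t a b + t a b') ∧
  (∀ (c : ℂ) (a : A) (b : B), t (c • a) b = c • t a b) ∧
  (∀ (c : ℂ) (a : A) (b : B), t a (c • b) = c • t a b) ∧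
  (∀ (a : A) (b : B), ‖t a b‖ ≤ ‖a‖ * ‖b‖) ∧
  ((Submodule.span ℂ {x : C | ∃ a b, x = t a b}).topologicalClosure = ⊤) ∧
  (∀ (E : Type) [NormedAddCommGroup E] [NormedSpace ℂ E] [CompleteSpace E],
    ∀ (f : A → B → E) (M : ℝ),
    (∀ a a' : A, ∀ b : B, f (a + a') b = f a b + f a' b) →
    (∀ a : A, ∀ b b' : B, f a (b + b') = f a b + f a b') →
    (∀ (c : ℂ) (a : A) (b : B), f (c • a) b = c • f a b) →
    (∀ (c : ℂ) (a : A) (b : B), f a (c • b) = c • f a b) →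
    (∀ (a : A) (b : B), ‖f a b‖ ≤ M * ‖a‖ * ‖b‖) →
    ∃ g : C →L[ℂ] E, ‖g‖ ≤ M ∧ ∀ a b, g (t a b) = f a b)


noncomputable instance BilForms.instNormedAddCommGroup (A : Type*) [NonUnitalNormedRing A] [NormedSpace ℂ A] : NormedAddCommGroup (BilForms A) :=
  @ContinuousLinearMap.toNormedAddCommGroup ℂ ℂ A (StrongDual ℂ A) _ _ _ _ _ _ _ _

noncomputable instance BilForms.instNormedSpace (A : Type*) [NonUnitalNormedRing A] [NormedSpace ℂ A] : NormedSpace ℂ (BilForms A) :=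
  ContinuousLinearMap.toNormedSpace (E := A) (F := StrongDual ℂ A) (σ₁₂ := RingHom.id ℂ) (𝕜' := ℂ)

/-- Two continuous linear maps out of `C` agreeing on elementary tensors are equal. -/
theorem ext_dense {A B C : Type}
    [NormedAddCommGroup A] [NormedSpace ℂ A] [NormedAddCommGroup B] [NormedSpace ℂ B]
    [NormedAddCommGroup C] [NormedSpace ℂ C] (t : A → B → C)
    (hspan : (Submodule.span ℂ {x : C | ∃ a b, x = t a b}).topologicalClosure = ⊤)
    {E : Type*} [NormedAddCommGroup E] [NormedSpace ℂ E]
    (g₁ g₂ : C →L[ℂ] E) (h : ∀ a b, g₁ (t a b) = g₂ (t a b)) : g₁ = g₂ := by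
  have hker : (Submodule.span ℂ {x : C | ∃ a b, x = t a b}) ≤ LinearMap.ker ((g₁ - g₂ : C →L[ℂ] E) : C →ₗ[ℂ] E) := by
    rw [Submodule.span_le]
    rintro _ ⟨a, b, rfl⟩
    simp only [SetLike.mem_coe, LinearMap.mem_ker, ContinuousLinearMap.coe_coe,
      ContinuousLinearMap.sub_apply, sub_eq_zero]
    exact h a b
  have hcl := Submodule.topologicalClosure_minimal _ hker (ContinuousLinearMap.isClosed_ker _)
  rw [hspan] at hcl
  ext x
  have hx : x ∈ (g₁ - g₂).ker := hcl Submodule.mem_top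
  have : (g₁ - g₂) x = 0 := hx
  rw [ContinuousLinearMap.sub_apply, sub_eq_zero] at this
  exact this

/-- Two continuous bilinear maps out of `C × C` agreeing on elementary tensors are equal. -/
theorem ext_dense2 {A B C : Type}
    [NormedAddCommGroup A] [NormedSpace ℂ A] [NormedAddCommGroup B] [NormedSpace ℂ B]
    [NormedAddCommGroup C] [NormedSpace ℂ C] (t : A → B → C)
    (hspan : (Submodule.span ℂ {x : C | ∃ a b, x = t a b}).topologicalClosure = ⊤)
    {E : Type*} [NormedAddCommGroup E] [NormedSpace ℂ E]
    (g₁ g₂ : C →L[ℂ] (C →L[ℂ] E))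
    (h : ∀ a b a' b', g₁ (t a b) (t a' b') = g₂ (t a b) (t a' b')) : g₁ = g₂ :=
  ext_dense t hspan g₁ g₂ fun a b => ext_dense t hspan _ _ fun a' b' => h a b a' b'

set_option maxHeartbeats 2000000 in
/-- Let `A` and `B` be Banach algebras, `B` containing a nonzero
idempotent.  If the projective tensor product Banach algebra `A ⊗̂ B` is strong
pseudo-amenable, then `A` is strong pseudo-amenable. -/
theorem strongPseudoAmenable_of_projectiveTensorProduct
    (A : Type) [NonUnitalNormedRing A] [NormedSpace ℂ A] [IsScalarTower ℂ A A]
    [SMulCommClass ℂ A A] [CompleteSpace A]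
    (B : Type) [NonUnitalNormedRing B] [NormedSpace ℂ B] [IsScalarTower ℂ B B]
    [SMulCommClass ℂ B B] [CompleteSpace B]
    (hB : ∃ b : B, b * b = b ∧ b ≠ 0)
    (C : Type) [NonUnitalNormedRing C] [NormedSpace ℂ C] [IsScalarTower ℂ C C]
    [SMulCommClass ℂ C C] [CompleteSpace C]
    (t : A → B → C) (ht : IsProjectiveTensorProduct A B C t)
    (htmul : ∀ (a a' : A) (b b' : B), t a b * t a' b' = t (a * a') (b * b'))
    (hC : StrongPseudoAmenable C) :
    StrongPseudoAmenable A := by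
  classical
  have hspan := ht.2.2.2.2.2.1
  have huniv := ht.2.2.2.2.2.2
  obtain ⟨p, hp2, hp0⟩ := hB
  -- a functional ψ with ψ p = 1
  obtain ⟨ψ0, hψ0norm, hψ0p⟩ := exists_dual_vector ℂ p (norm_ne_zero_iff.mpr hp0)
  set ψ : StrongDual ℂ B := (‖p‖ : ℂ)⁻¹ • ψ0 with hψdef
  have hpnz : (‖p‖ : ℂ) ≠ 0 := by
    simpa using norm_ne_zero_iff.mpr hp0
  have hψp : ψ p = 1 := by
    rw [hψdef]
    simp only [ContinuousLinearMap.smul_apply, hψ0p, smul_eq_mul]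
    exact inv_mul_cancel₀ hpnz
  -- the corner functional φ b = ψ (p * (b * p))
  set φ : StrongDual ℂ B :=
    ψ.comp ((ContinuousLinearMap.mul ℂ B p).comp ((ContinuousLinearMap.mul ℂ B).flip p))
    with hφdef
  have hφ : ∀ b, φ b = ψ (p * (b * p)) := fun b => by
    rw [hφdef]
    simp [ContinuousLinearMap.mul_apply', ContinuousLinearMap.flip_apply]
  have hφl : ∀ b, φ (p * b) = φ b := by
    intro b
    rw [hφ, hφ]
    congr 1
    simp only [← mul_assoc, hp2]
  have hφr : ∀ b, φ (b * p) = φ b := by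
    intro b
    rw [hφ, hφ]
    congr 1
    simp only [← mul_assoc]
    rw [mul_assoc, hp2]
  have hφp : φ p = 1 := by rw [hφ, hp2, hp2, hψp]
  -- the slice map q : C →L A, q (t a b) = φ b • a
  obtain ⟨q, hqnorm, hq⟩ := huniv A (fun a b => φ b • a) ‖φ‖
    (fun a a' b => by rw [smul_add])
    (fun a b b' => by rw [map_add, add_smul])
    (fun c a b => smul_comm (φ b) c a)
    (fun c a b => by rw [map_smul, smul_eq_mul, mul_smul])
    (fun a b => by
      rw [norm_smul]
      calc ‖φ b‖ * ‖a‖ ≤ (‖φ‖ * ‖b‖) * ‖a‖ := by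
            gcongr
            exact φ.le_opNorm b
        _ = ‖φ‖ * ‖a‖ * ‖b‖ := by ring)
  -- the scalar-level transfer functionals
  have hlam : ∀ (f : BilForms A) (x : A) (bb : B), ∃ lam : C →L[ℂ] ℂ,
      ‖lam‖ ≤ ‖φ‖ * ‖bb‖ * ‖f‖ * ‖x‖ ∧ ∀ x' b', lam (t x' b') = φ (bb * b') * f x x' := by
    intro f x bb
    obtain ⟨g, hg, hgt⟩ := huniv ℂ (fun x' b' => φ (bb * b') * f x x')
      (‖φ‖ * ‖bb‖ * ‖f‖ * ‖x‖)
      (fun x' x'' b' => by rw [map_add]; simp [ContinuousLinearMap.add_apply, mul_add])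
      (fun x' b' b'' => by rw [mul_add, map_add, add_mul])
      (fun c x' b' => by rw [map_smul]; simp [smul_eq_mul]; ring)
      (fun c x' b' => by rw [mul_smul_comm, map_smul]; simp [smul_eq_mul]; ring)
      (fun x' b' => by
        rw [norm_mul]
        have h1 : ‖φ (bb * b')‖ ≤ ‖φ‖ * (‖bb‖ * ‖b'‖) :=
          le_trans (φ.le_opNorm _) (by gcongr; exact norm_mul_le _ _)
        have h2 : ‖f x x'‖ ≤ ‖f‖ * ‖x‖ * ‖x'‖ := f.le_opNorm₂ x x'
        calc ‖φ (bb * b')‖ * ‖f x x'‖ ≤ (‖φ‖ * (‖bb‖ * ‖b'‖)) * (‖f‖ * ‖x‖ * ‖x'‖) :=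
              mul_le_mul h1 h2 (norm_nonneg _) (by positivity)
          _ = ‖φ‖ * ‖bb‖ * ‖f‖ * ‖x‖ * ‖x'‖ * ‖b'‖ := by ring)
    exact ⟨g, hg, hgt⟩
  choose lam hlamnorm hlamspec using hlam
  -- the transfer operator on bilinear forms
  have hT : ∀ f : BilForms A, ∃ Tf : BilForms C,
      ‖Tf‖ ≤ ‖φ‖ * ‖f‖ ∧ ∀ x bb, Tf (t x bb) = lam f x bb := by
    intro f
    obtain ⟨Tf, hn, hs⟩ := huniv (C →L[ℂ] ℂ) (fun x bb => lam f x bb) (‖φ‖ * ‖f‖)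
      (fun x x' bb => ext_dense t hspan _ _ (fun y b' => by
        simp [hlamspec, map_add, ContinuousLinearMap.add_apply, mul_add]))
      (fun x bb bb' => ext_dense t hspan _ _ (fun y b' => by
        simp [hlamspec, add_mul, map_add, ContinuousLinearMap.add_apply]))
      (fun c x bb => ext_dense t hspan _ _ (fun y b' => by
        simp [hlamspec, map_smul, smul_eq_mul]; ring))
      (fun c x bb => ext_dense t hspan _ _ (fun y b' => by
        simp [hlamspec, smul_mul_assoc, map_smul, smul_eq_mul]; ring))
      (fun x bb => by
        calc ‖lam f x bb‖ ≤ ‖φ‖ * ‖bb‖ * ‖f‖ * ‖x‖ := hlamnorm f x bb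
          _ = ‖φ‖ * ‖f‖ * ‖x‖ * ‖bb‖ := by ring)
    exact ⟨Tf, hn, hs⟩
  choose Tm hTnorm hTspec using hT
  have hTfull : ∀ (f : BilForms A) x bb x' b',
      Tm f (t x bb) (t x' b') = φ (bb * b') * f x x' := by
    intro f x bb x' b'
    rw [hTspec f x bb]
    exact hlamspec f x bb x' b'
  have hTadd : ∀ f g : BilForms A, Tm (f + g) = Tm f + Tm g := by
    intro f g
    refine ext_dense2 t hspan _ _ fun x b x' b' => ?_
    simp [hTfull, ContinuousLinearMap.add_apply, mul_add]
  have hTsmul : ∀ (c : ℂ) (f : BilForms A), Tm (c • f) = c • Tm f := by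
    intro c f
    refine ext_dense2 t hspan _ _ fun x b x' b' => ?_
    simp [hTfull, ContinuousLinearMap.smul_apply, smul_eq_mul]
    ring
  set Tlin : BilForms A →ₗ[ℂ] BilForms C :=
    { toFun := Tm, map_add' := hTadd, map_smul' := hTsmul } with hTlindef
  set Tcl : BilForms A →L[ℂ] BilForms C := LinearMap.mkContinuous (𝕜 := ℂ) (𝕜₂ := ℂ) (σ := RingHom.id ℂ) (E := BilForms A) (F := BilForms C) Tlin ‖φ‖ (by exact fun f => hTnorm f) with hTcldef
  have hTcl : ∀ f, Tcl f = Tm f := fun f => rfl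
  -- the predual transfer S on functionals
  set S : StrongDual ℂ A →L[ℂ] StrongDual ℂ C :=
    (ContinuousLinearMap.compL ℂ C A ℂ).flip q with hSdef
  have hS : ∀ (g : StrongDual ℂ A) (c : C), S g c = g (q c) := by
    intro g c
    rw [hSdef]
    simp [ContinuousLinearMap.flip_apply, ContinuousLinearMap.compL_apply]
  -- intertwining identities
  have hI : ∀ a : A, Tcl.comp (leftBil A a) = (leftBil C (t a p)).comp Tcl := by
    intro a
    refine ContinuousLinearMap.ext fun f => ?_
    refine ext_dense2 t hspan _ _ fun x b x' b' => ?_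
    simp only [ContinuousLinearMap.comp_apply, hTcl, leftBil,
      ContinuousLinearMap.flip_apply, ContinuousLinearMap.compL_apply,
      ContinuousLinearMap.mul_apply', htmul, hTfull, mul_assoc, hφl]
  have hII : ∀ a : A, Tcl.comp (rightBil A a) = (rightBil C (t a p)).comp Tcl := by
    intro a
    refine ContinuousLinearMap.ext fun f => ?_
    refine ext_dense2 t hspan _ _ fun x b x' b' => ?_
    simp only [ContinuousLinearMap.comp_apply, hTcl, rightBil,
      ContinuousLinearMap.flip_apply, ContinuousLinearMap.compL_apply,
      ContinuousLinearMap.mul_apply', htmul, hTfull, ← mul_assoc, hφr]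
  have hIII : Tcl.comp (piStar A) = (piStar C).comp S := by
    refine ContinuousLinearMap.ext fun g => ?_
    refine ext_dense2 t hspan _ _ fun x b x' b' => ?_
    simp only [ContinuousLinearMap.comp_apply, hTcl, piStar,
      ContinuousLinearMap.flip_apply, ContinuousLinearMap.compL_apply,
      ContinuousLinearMap.mul_apply', htmul, hTfull, hS, hq, map_smul, smul_eq_mul]
  have hIV : ∀ a : A, S.comp (dualROp A a) = (dualROp C (t a p)).comp S := by
    intro a
    refine ContinuousLinearMap.ext fun g => ?_
    refine ext_dense t hspan _ _ fun x b => ?_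
    simp only [ContinuousLinearMap.comp_apply, dualROp,
      ContinuousLinearMap.flip_apply, ContinuousLinearMap.compL_apply,
      ContinuousLinearMap.mul_apply', htmul, hS, hq, mul_smul_comm, map_smul,
      smul_eq_mul, hφl]
  have hV : ∀ a : A, S.comp (dualLOp A a) = (dualLOp C (t a p)).comp S := by
    intro a
    refine ContinuousLinearMap.ext fun g => ?_
    refine ext_dense t hspan _ _ fun x b => ?_
    simp only [ContinuousLinearMap.comp_apply, dualLOp,
      ContinuousLinearMap.flip_apply, ContinuousLinearMap.compL_apply,
      ContinuousLinearMap.mul_apply', htmul, hS, hq, smul_mul_assoc, map_smul,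
      smul_eq_mul, hφr]
  have hVI : ∀ a : A, (inclB a : Bidual A) = (inclB (t a p) : Bidual C).comp S := by
    intro a
    refine ContinuousLinearMap.ext fun g => ?_
    simp only [inclB, ContinuousLinearMap.comp_apply, NormedSpace.dual_def, hS, hq,
      hφp, one_smul]
  -- push the net
  obtain ⟨D, m, hm1, hm2, hm3⟩ := hC
  have hpiall : ∀ α, piSS ((m α).comp Tcl) = (piSS (m α)).comp S := by
    intro α
    simp only [piSS]
    rw [ContinuousLinearMap.comp_assoc, hIII, ← ContinuousLinearMap.comp_assoc]
  have hball : ∀ (a : A) (α),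
      bsmulR a (piSS ((m α).comp Tcl)) = (bsmulR (t a p) (piSS (m α))).comp S := by
    intro a α
    rw [hpiall α]
    simp only [bsmulR]
    rw [ContinuousLinearMap.comp_assoc, hV a, ← ContinuousLinearMap.comp_assoc]
  refine ⟨D, fun α => (m α).comp Tcl, ?_, ?_, ?_⟩
  · intro a ε hε
    have hTclpos : (0:ℝ) < ‖Tcl‖ + 1 := by positivity
    obtain ⟨i, hi⟩ := hm1 (t a p) (ε / (‖Tcl‖ + 1)) (by positivity)
    refine ⟨i, fun j hj => ?_⟩
    have hrw : tsmulL a ((m j).comp Tcl) - tsmulR a ((m j).comp Tcl)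
        = (tsmulL (t a p) (m j) - tsmulR (t a p) (m j)).comp Tcl := by
      simp only [tsmulL, tsmulR]
      rw [ContinuousLinearMap.sub_comp]
      congr 1
      · rw [ContinuousLinearMap.comp_assoc, ContinuousLinearMap.comp_assoc, hI a]
      · rw [ContinuousLinearMap.comp_assoc, ContinuousLinearMap.comp_assoc, hII a]
    simp only [dist_zero_right]
    rw [hrw]
    have h1 := ContinuousLinearMap.opNorm_comp_le
      (tsmulL (t a p) (m j) - tsmulR (t a p) (m j)) Tcl
    have h2 : ‖tsmulL (t a p) (m j) - tsmulR (t a p) (m j)‖ < ε / (‖Tcl‖ + 1) := by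
      have := hi j hj
      rwa [dist_zero_right] at this
    have h3 : ε / (‖Tcl‖ + 1) * (‖Tcl‖ + 1) = ε := div_mul_cancel₀ ε (ne_of_gt hTclpos)
    calc ‖(tsmulL (t a p) (m j) - tsmulR (t a p) (m j)).comp Tcl‖
        ≤ ‖tsmulL (t a p) (m j) - tsmulR (t a p) (m j)‖ * ‖Tcl‖ := h1
      _ ≤ ‖tsmulL (t a p) (m j) - tsmulR (t a p) (m j)‖ * (‖Tcl‖ + 1) :=
          mul_le_mul_of_nonneg_left (by linarith) (norm_nonneg _)
      _ < (ε / (‖Tcl‖ + 1)) * (‖Tcl‖ + 1) := mul_lt_mul_of_pos_right h2 hTclpos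
      _ = ε := h3
  · intro a α
    rw [hpiall α]
    have hL : bsmulL a ((piSS (m α)).comp S) = (bsmulL (t a p) (piSS (m α))).comp S := by
      simp only [bsmulL]
      rw [ContinuousLinearMap.comp_assoc, hIV a, ← ContinuousLinearMap.comp_assoc]
    have hR : bsmulR a ((piSS (m α)).comp S) = (bsmulR (t a p) (piSS (m α))).comp S := by
      simp only [bsmulR]
      rw [ContinuousLinearMap.comp_assoc, hV a, ← ContinuousLinearMap.comp_assoc]
    rw [hL, hR, hm2 (t a p) α]
  · intro a ε hε
    have hSpos : (0:ℝ) < ‖S‖ + 1 := by positivity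
    obtain ⟨i, hi⟩ := hm3 (t a p) (ε / (‖S‖ + 1)) (by positivity)
    refine ⟨i, fun j hj => ?_⟩
    simp only [dist_eq_norm]
    rw [hball a j, hVI a]
    refine (dist_eq_norm ((bsmulR (t a p) (piSS (m j))).comp S) ((inclB (t a p) : Bidual C).comp S)).trans_lt ?_
    rw [← ContinuousLinearMap.sub_comp]
    have h1 := ContinuousLinearMap.opNorm_comp_le
      (bsmulR (t a p) (piSS (m j)) - inclB (t a p)) S
    have h2 : ‖bsmulR (t a p) (piSS (m j)) - inclB (t a p)‖ < ε / (‖S‖ + 1) := by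
      have := hi j hj
      exact (dist_eq_norm (bsmulR (t a p) (piSS (m j))) (inclB (t a p))).symm.trans_lt this
    have h3 : ε / (‖S‖ + 1) * (‖S‖ + 1) = ε := div_mul_cancel₀ ε (ne_of_gt hSpos)
    calc ‖(bsmulR (t a p) (piSS (m j)) - inclB (t a p)).comp S‖
        ≤ ‖bsmulR (t a p) (piSS (m j)) - inclB (t a p)‖ * ‖S‖ := h1
      _ ≤ ‖bsmulR (t a p) (piSS (m j)) - inclB (t a p)‖ * (‖S‖ + 1) :=
          mul_le_mul_of_nonneg_left (by linarith) (ContinuousLinearMap.opNorm_nonneg _)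
      _ < (ε / (‖S‖ + 1)) * (‖S‖ + 1) := mul_lt_mul_of_pos_right h2 hSpos
      _ = ε := h3
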